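/- Let ν ≥ −1/2 and γ > 0 be fixed. There exist constants 0 < c ≤ C, depending only on ν and γ, such that for all A > B ≥ 0 the integral G(A,B) = ∫_{[−1,1]} (A − Bs)^{−γ} dΠ_ν(s) satisfies: if γ > ν + 1/2, then c ≤ G(A,B) / [A^{−ν−1/2} (A−B)^{−γ+ν+1/2}] ≤ C; if γ = ν + 1/2, then c ≤ G(A,B) / [A^{−ν−1/2} (1 + log⁺(B/(A−B)))] ≤ C; if γ < ν + 1/2, then c ≤ G(A,B) / A^{−γ} ≤ C. Here log⁺ x = max(log x, 0). -/

import Mathlib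

open MeasureTheory Real Set
open scoped Classical ENNReal NNReal

noncomputable section

/-- `log⁺ x = max (log x) 0`. -/
def logPlus (x : ℝ) : ℝ := max (Real.log x) 0

/-- The measure `dΠ_ν` on `[−1,1]`: for `ν > −1/2` the probability measure with density
`u ↦ Γ(ν+1)/(√π Γ(ν+1/2)) (1−u²)^{ν−1/2}`, and for `ν = −1/2` half the sum of the unit
point masses at `−1` and `1`. -/
def piMeasure (ν : ℝ) : Measure ℝ :=
  if ν = -1/2 then ((1:ENNReal)/2) • (Measure.dirac (-1) + Measure.dirac 1)
  else (volume.restrict (Set.Ioo (-1:ℝ) 1)).withDensity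
    (fun u => ENNReal.ofReal
      (Real.Gamma (ν+1) / (Real.sqrt π * Real.Gamma (ν+1/2)) * (1 - u^2) ^ (ν - 1/2)))

private lemma rpow_anti {x y p : ℝ} (hx : 0 < x) (hxy : x ≤ y) (hp : p ≤ 0) :
    y ^ p ≤ x ^ p := Real.rpow_le_rpow_of_nonpos hx hxy hp

private lemma rpow_bounds {a b x κ : ℝ} (ha : 0 < a) (hax : a ≤ x) (hxb : x ≤ b) :
    min (a ^ κ) (b ^ κ) ≤ x ^ κ ∧ x ^ κ ≤ max (a ^ κ) (b ^ κ) := by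
  rcases le_or_gt 0 κ with h | h
  · exact ⟨(min_le_left _ _).trans (Real.rpow_le_rpow ha.le hax h),
      (Real.rpow_le_rpow (ha.le.trans hax) hxb h).trans (le_max_right _ _)⟩
  · exact ⟨(min_le_right _ _).trans (rpow_anti (ha.trans_le hax) hxb h.le),
      (rpow_anti ha hax h.le).trans (le_max_left _ _)⟩

private lemma integral_mono_Ioc {f g : ℝ → ℝ} {a b : ℝ} (hab : a ≤ b)
    (hf : IntervalIntegrable f volume a b) (hg : IntervalIntegrable g volume a b)
    (h : ∀ x ∈ Set.Ioc a b, f x ≤ g x) :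
    ∫ x in a..b, f x ≤ ∫ x in a..b, g x := by
  rw [intervalIntegral.integral_of_le hab, intervalIntegral.integral_of_le hab]
  exact setIntegral_mono_on ((intervalIntegrable_iff_integrableOn_Ioc_of_le hab).mp hf)
    ((intervalIntegrable_iff_integrableOn_Ioc_of_le hab).mp hg) measurableSet_Ioc h

private lemma ii_dominate {f g : ℝ → ℝ} {a b : ℝ} (hg : IntervalIntegrable g volume a b)
    (hf : Measurable f) (h : ∀ x ∈ Set.uIoc a b, |f x| ≤ g x) :
    IntervalIntegrable f volume a b := by
  refine hg.mono_fun hf.aestronglyMeasurable ?_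
  filter_upwards [ae_restrict_mem measurableSet_uIoc] with x hx
  simpa [Real.norm_eq_abs] using (h x hx).trans (le_abs_self _)

private lemma ii_tpow' {r a b : ℝ} (ha : 0 < a) (hab : a ≤ b) :
    IntervalIntegrable (fun t : ℝ => t ^ r) volume a b := by
  apply ContinuousOn.intervalIntegrable
  apply ContinuousOn.rpow_const continuousOn_id
  intro x hx
  rw [Set.uIcc_of_le hab] at hx
  exact Or.inl (ne_of_gt (lt_of_lt_of_le ha hx.1))

private lemma integral_tpow' {r : ℝ} (hr : r ≠ -1) {a b : ℝ} (ha : 0 < a) (hab : a ≤ b) :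
    ∫ t in a..b, t ^ r = (b ^ (r+1) - a ^ (r+1)) / (r+1) := by
  apply integral_rpow
  refine Or.inr ⟨hr, ?_⟩
  rw [Set.uIcc_of_le hab]
  intro h0
  exact absurd (Set.mem_Icc.mp h0).1 (not_le.mpr ha)

private lemma integral_tinv {a b : ℝ} (ha : 0 < a) (hab : a ≤ b) :
    ∫ t in a..b, t ^ (-1:ℝ) = Real.log (b / a) := by
  have h0 : (0:ℝ) ∉ Set.uIcc a b := by
    rw [Set.uIcc_of_le hab]
    intro h0
    exact absurd (Set.mem_Icc.mp h0).1 (not_le.mpr ha)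
  rw [intervalIntegral.integral_congr (g := fun x : ℝ => x⁻¹)
    (fun x hx => Real.rpow_neg_one x)]
  exact integral_inv h0

section Core
variable {κ γ A B : ℝ}

private lemma base_pos (hB : 0 ≤ B) (hAB : B < A) {s : ℝ} (hs : s ≤ 1) :
    0 < A - B * s := by nlinarith [mul_le_mul_of_nonneg_left hs hB]

private lemma h_nonneg (hB : 0 ≤ B) (hAB : B < A) {s : ℝ} (hs1 : -1 ≤ s) (hs2 : s ≤ 1) :
    0 ≤ (A - B*s) ^ (-γ) * (1 - s^2) ^ κ :=
  mul_nonneg (Real.rpow_nonneg (base_pos hB hAB hs2).le _)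
    (Real.rpow_nonneg (by nlinarith) _)

private lemma h_ii (hκ : -1 < κ) (hγ : 0 < γ) (hB : 0 ≤ B) (hAB : B < A) :
    IntervalIntegrable (fun s : ℝ => (A - B*s) ^ (-γ) * (1 - s^2) ^ κ) volume (-1) 1 := by
  have hD : (0:ℝ) < A - B := by linarith
  apply IntervalIntegrable.trans (b := 0)
  · -- on [-1, 0]
    have hgi : IntervalIntegrable
        (fun s : ℝ => (A-B) ^ (-γ) * max ((1:ℝ)^κ) ((2:ℝ)^κ) * (s+1) ^ κ) volume (-1) 0 := by
      have h1 := (intervalIntegral.intervalIntegrable_rpow' (a := 0) (b := 1) hκ).comp_add_right 1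
      norm_num at h1
      exact h1.const_mul _
    apply ii_dominate hgi (by fun_prop)
    intro s hs
    rw [Set.uIoc_of_le (by norm_num : (-1:ℝ) ≤ 0)] at hs
    obtain ⟨hs1, hs2⟩ := hs
    rw [abs_of_nonneg (h_nonneg hB hAB hs1.le (by linarith))]
    have e : (1 - s^2) = (1-s) * (s+1) := by ring
    rw [e, Real.mul_rpow (by linarith) (by linarith)]
    have b1 : (A - B*s) ^ (-γ) ≤ (A-B) ^ (-γ) :=
      rpow_anti hD (by nlinarith [mul_le_mul_of_nonneg_left hs2 hB]) (by linarith)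
    have b2 : (1-s) ^ κ ≤ max ((1:ℝ)^κ) ((2:ℝ)^κ) :=
      (rpow_bounds one_pos (by linarith) (by linarith)).2
    have n2 : (0:ℝ) ≤ (s+1) ^ κ := Real.rpow_nonneg (by linarith) _
    have n3 : (0:ℝ) ≤ (1-s) ^ κ := Real.rpow_nonneg (by linarith) _
    calc (A - B*s)^(-γ) * ((1-s)^κ * (s+1)^κ)
        = ((A - B*s)^(-γ) * (1-s)^κ) * (s+1)^κ := by ring
      _ ≤ ((A-B)^(-γ) * max ((1:ℝ)^κ) ((2:ℝ)^κ)) * (s+1)^κ :=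
          mul_le_mul_of_nonneg_right
            (mul_le_mul b1 b2 n3 (Real.rpow_nonneg hD.le _)) n2
      _ = (A-B)^(-γ) * max ((1:ℝ)^κ) ((2:ℝ)^κ) * (s+1)^κ := by ring
  · -- on [0, 1]
    have hgi : IntervalIntegrable
        (fun s : ℝ => (A-B) ^ (-γ) * max ((1:ℝ)^κ) ((2:ℝ)^κ) * (1-s) ^ κ) volume 0 1 := by
      have h1 := (intervalIntegral.intervalIntegrable_rpow' (a := 0) (b := 1) hκ).comp_sub_left 1
      norm_num at h1
      exact (h1.symm).const_mul _
    apply ii_dominate hgi (by fun_prop)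
    intro s hs
    rw [Set.uIoc_of_le (by norm_num : (0:ℝ) ≤ 1)] at hs
    obtain ⟨hs1, hs2⟩ := hs
    rw [abs_of_nonneg (h_nonneg hB hAB (by linarith) hs2)]
    have e : (1 - s^2) = (1-s) * (s+1) := by ring
    rw [e, Real.mul_rpow (by linarith) (by linarith)]
    have b1 : (A - B*s) ^ (-γ) ≤ (A-B) ^ (-γ) :=
      rpow_anti hD (by nlinarith [mul_le_mul_of_nonneg_left hs2 hB]) (by linarith)
    have b2 : (s+1) ^ κ ≤ max ((1:ℝ)^κ) ((2:ℝ)^κ) :=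
      (rpow_bounds one_pos (by linarith) (by linarith)).2
    have n2 : (0:ℝ) ≤ (s+1) ^ κ := Real.rpow_nonneg (by linarith) _
    have n3 : (0:ℝ) ≤ (1-s) ^ κ := Real.rpow_nonneg (by linarith) _
    calc (A - B*s)^(-γ) * ((1-s)^κ * (s+1)^κ)
        = ((A - B*s)^(-γ) * (s+1)^κ) * (1-s)^κ := by ring
      _ ≤ ((A-B)^(-γ) * max ((1:ℝ)^κ) ((2:ℝ)^κ)) * (1-s)^κ :=
          mul_le_mul_of_nonneg_right
            (mul_le_mul b1 b2 n2 (Real.rpow_nonneg hD.le _)) n3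
      _ = (A-B)^(-γ) * max ((1:ℝ)^κ) ((2:ℝ)^κ) * (1-s)^κ := by ring


private lemma hsub_ii (hκ : -1 < κ) (hγ : 0 < γ) (hB : 0 ≤ B) (hAB : B < A)
    {a b : ℝ} (ha : -1 ≤ a) (hab : a ≤ b) (hb : b ≤ 1) :
    IntervalIntegrable (fun s : ℝ => (A - B*s) ^ (-γ) * (1 - s^2) ^ κ) volume a b := by
  apply (h_ii hκ hγ hB hAB).mono_set
  rw [Set.uIcc_of_le hab, Set.uIcc_of_le (by norm_num : (-1:ℝ) ≤ 1)]
  exact Set.Icc_subset_Icc ha hb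

private lemma I_nonneg (hB : 0 ≤ B) (hAB : B < A) {a b : ℝ}
    (ha : -1 ≤ a) (hb : b ≤ 1) (hab : a ≤ b) :
    0 ≤ ∫ s in a..b, (A - B*s) ^ (-γ) * (1 - s^2) ^ κ :=
  intervalIntegral.integral_nonneg hab
    (fun u hu => h_nonneg hB hAB (by linarith [hu.1]) (by linarith [hu.2]))

private lemma I_minus_low (hκ : -1 < κ) (hγ : 0 < γ) (hB : 0 ≤ B) (hAB : B < A) :
    min ((3/4:ℝ)^κ) ((1:ℝ)^κ) * (2:ℝ)^(-γ) / 2 * A ^ (-γ) ≤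
      ∫ s in (-1:ℝ)..0, (A - B*s) ^ (-γ) * (1 - s^2) ^ κ := by
  have hA : 0 < A := lt_of_le_of_lt hB hAB
  have e1 : (∫ s in (-1:ℝ)..(-1/2), (A - B*s)^(-γ)*(1-s^2)^κ)
      + (∫ s in (-1/2:ℝ)..0, (A - B*s)^(-γ)*(1-s^2)^κ)
      = ∫ s in (-1:ℝ)..0, (A - B*s)^(-γ)*(1-s^2)^κ :=
    intervalIntegral.integral_add_adjacent_intervals
      (hsub_ii hκ hγ hB hAB (le_refl _) (by norm_num) (by norm_num))
      (hsub_ii hκ hγ hB hAB (by norm_num) (by norm_num) (by norm_num))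
  have key : min ((3/4:ℝ)^κ) ((1:ℝ)^κ) * (2:ℝ)^(-γ) / 2 * A^(-γ) ≤
      ∫ s in (-1/2:ℝ)..0, (A - B*s)^(-γ)*(1-s^2)^κ := by
    have hc : ∫ s in (-1/2:ℝ)..0,
        (min ((3/4:ℝ)^κ) ((1:ℝ)^κ) * ((2:ℝ)^(-γ) * A^(-γ))) =
        min ((3/4:ℝ)^κ) ((1:ℝ)^κ) * (2:ℝ)^(-γ) / 2 * A^(-γ) := by
      rw [intervalIntegral.integral_const]
      norm_num
      ring
    rw [← hc]
    apply integral_mono_Ioc (by norm_num) intervalIntegrable_const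
      (hsub_ii hκ hγ hB hAB (by norm_num) (by norm_num) (by norm_num))
    intro s hs
    obtain ⟨hs1, hs2⟩ := hs
    have hb1 : (0:ℝ) < A - B*s := base_pos hB hAB (by linarith)
    have l1 : (2:ℝ)^(-γ) * A^(-γ) ≤ (A - B*s)^(-γ) := by
      rw [← Real.mul_rpow (by norm_num) hA.le]
      exact rpow_anti hb1 (by nlinarith) (by linarith)
    have l2 : min ((3/4:ℝ)^κ) ((1:ℝ)^κ) ≤ (1 - s^2)^κ :=
      (rpow_bounds (by norm_num) (by nlinarith) (by nlinarith)).1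
    calc min ((3/4:ℝ)^κ) ((1:ℝ)^κ) * ((2:ℝ)^(-γ) * A^(-γ))
        = ((2:ℝ)^(-γ) * A^(-γ)) * min ((3/4:ℝ)^κ) ((1:ℝ)^κ) := by ring
      _ ≤ (A - B*s)^(-γ) * (1 - s^2)^κ :=
          mul_le_mul l1 l2 (le_min (Real.rpow_nonneg (by norm_num) _)
            (Real.rpow_nonneg (by norm_num) _)) (Real.rpow_nonneg hb1.le _)
  have n1 := I_nonneg (κ := κ) (γ := γ) hB hAB
    (le_refl (-1:ℝ)) (by norm_num) (by norm_num : (-1:ℝ) ≤ -1/2)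
  linarith

private lemma I_low (hκ : -1 < κ) (hγ : 0 < γ) (hB : 0 ≤ B) (hAB : B < A) :
    min ((3/4:ℝ)^κ) ((1:ℝ)^κ) * (2:ℝ)^(-γ) / 2 * A ^ (-γ) ≤
      ∫ s in (-1:ℝ)..1, (A - B*s) ^ (-γ) * (1 - s^2) ^ κ := by
  have e1 : (∫ s in (-1:ℝ)..0, (A - B*s)^(-γ)*(1-s^2)^κ)
      + (∫ s in (0:ℝ)..1, (A - B*s)^(-γ)*(1-s^2)^κ)
      = ∫ s in (-1:ℝ)..1, (A - B*s)^(-γ)*(1-s^2)^κ :=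
    intervalIntegral.integral_add_adjacent_intervals
      (hsub_ii hκ hγ hB hAB (le_refl _) (by norm_num) (by norm_num))
      (hsub_ii hκ hγ hB hAB (by norm_num) (by norm_num) (le_refl _))
  have n1 := I_nonneg (κ := κ) (γ := γ) hB hAB
    (by norm_num : (-1:ℝ) ≤ 0) (le_refl (1:ℝ)) (by norm_num)
  linarith [I_minus_low (A := A) (B := B) hκ hγ hB hAB]

private lemma I_minus_up (hκ : -1 < κ) (hγ : 0 < γ) (hB : 0 ≤ B) (hAB : B < A) :
    ∫ s in (-1:ℝ)..0, (A - B*s)^(-γ)*(1-s^2)^κ ≤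
      max ((1:ℝ)^κ) ((2:ℝ)^κ) / (κ+1) * A^(-γ) := by
  have hA : 0 < A := lt_of_le_of_lt hB hAB
  have hgi : IntervalIntegrable
      (fun s : ℝ => A ^ (-γ) * max ((1:ℝ)^κ) ((2:ℝ)^κ) * (s+1) ^ κ) volume (-1) 0 := by
    have h1 := (intervalIntegral.intervalIntegrable_rpow' (a := 0) (b := 1) hκ).comp_add_right 1
    norm_num at h1
    exact h1.const_mul _
  have step : ∫ s in (-1:ℝ)..0, (A - B*s)^(-γ)*(1-s^2)^κ ≤
      ∫ s in (-1:ℝ)..0, A ^ (-γ) * max ((1:ℝ)^κ) ((2:ℝ)^κ) * (s+1) ^ κ := by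
    apply integral_mono_Ioc (by norm_num)
      (hsub_ii hκ hγ hB hAB (le_refl _) (by norm_num) (by norm_num)) hgi
    intro s hs
    obtain ⟨hs1, hs2⟩ := hs
    have e : (1 - s^2) = (1-s) * (s+1) := by ring
    rw [e, Real.mul_rpow (by linarith) (by linarith)]
    have b1 : (A - B*s) ^ (-γ) ≤ A ^ (-γ) :=
      rpow_anti hA (by nlinarith) (by linarith)
    have b2 : (1-s) ^ κ ≤ max ((1:ℝ)^κ) ((2:ℝ)^κ) :=
      (rpow_bounds one_pos (by linarith) (by linarith)).2
    have n2 : (0:ℝ) ≤ (s+1) ^ κ := Real.rpow_nonneg (by linarith) _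
    have n3 : (0:ℝ) ≤ (1-s) ^ κ := Real.rpow_nonneg (by linarith) _
    calc (A - B*s)^(-γ) * ((1-s)^κ * (s+1)^κ)
        = ((A - B*s)^(-γ) * (1-s)^κ) * (s+1)^κ := by ring
      _ ≤ (A^(-γ) * max ((1:ℝ)^κ) ((2:ℝ)^κ)) * (s+1)^κ :=
          mul_le_mul_of_nonneg_right
            (mul_le_mul b1 b2 n3 (Real.rpow_nonneg hA.le _)) n2
      _ = A^(-γ) * max ((1:ℝ)^κ) ((2:ℝ)^κ) * (s+1)^κ := by ring
  have ev : ∫ s in (-1:ℝ)..0, A ^ (-γ) * max ((1:ℝ)^κ) ((2:ℝ)^κ) * (s+1) ^ κ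
      = max ((1:ℝ)^κ) ((2:ℝ)^κ) / (κ+1) * A^(-γ) := by
    rw [show (fun s : ℝ => A ^ (-γ) * max ((1:ℝ)^κ) ((2:ℝ)^κ) * (s+1) ^ κ)
      = (fun s : ℝ => A ^ (-γ) * max ((1:ℝ)^κ) ((2:ℝ)^κ) * ((s+1) ^ κ)) from rfl]
    rw [intervalIntegral.integral_const_mul]
    have e2 : ∫ s in (-1:ℝ)..0, (s+1) ^ κ = ∫ u in (0:ℝ)..1, u ^ κ := by
      have := intervalIntegral.integral_comp_add_right (a := (-1:ℝ)) (b := 0)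
        (fun u : ℝ => u ^ κ) 1
      norm_num at this
      exact this
    rw [e2, integral_rpow (Or.inl hκ), Real.zero_rpow (by linarith : κ + 1 ≠ 0)]
    rw [show ((1:ℝ) ^ (κ+1)) = 1 from Real.one_rpow _]
    ring
  exact step.trans (le_of_eq ev)


private lemma j_ii (hκ : -1 < κ) (hγ : 0 < γ) (hB : 0 ≤ B) (hAB : B < A)
    {a b : ℝ} (ha : 0 ≤ a) (hab : a ≤ b) (hb : b ≤ 1) :
    IntervalIntegrable (fun t : ℝ => (A - B + B*t) ^ (-γ) * t ^ κ) volume a b := by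
  have hD : (0:ℝ) < A - B := by linarith
  have hgi : IntervalIntegrable (fun t : ℝ => (A-B) ^ (-γ) * t ^ κ) volume a b := by
    apply ((intervalIntegral.intervalIntegrable_rpow' (a := 0) (b := 1) hκ).const_mul
      ((A-B) ^ (-γ))).mono_set
    rw [Set.uIcc_of_le hab, Set.uIcc_of_le (by norm_num : (0:ℝ) ≤ 1)]
    exact Set.Icc_subset_Icc ha hb
  apply ii_dominate hgi (by fun_prop)
  intro t ht
  rw [Set.uIoc_of_le hab] at ht
  obtain ⟨ht1, ht2⟩ := ht
  have ht0 : 0 < t := lt_of_le_of_lt ha ht1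
  have hbase : 0 < A - B + B*t := by nlinarith
  rw [abs_of_nonneg (mul_nonneg (Real.rpow_nonneg hbase.le _) (Real.rpow_nonneg ht0.le _))]
  exact mul_le_mul_of_nonneg_right
    (rpow_anti hD (by nlinarith) (by linarith)) (Real.rpow_nonneg ht0.le _)

private lemma j_nonneg (hB : 0 ≤ B) (hAB : B < A) {t : ℝ} (ht : 0 ≤ t) :
    0 ≤ (A - B + B*t) ^ (-γ) * t ^ κ :=
  mul_nonneg (Real.rpow_nonneg (by nlinarith) _) (Real.rpow_nonneg ht _)

private lemma J_nonneg (hB : 0 ≤ B) (hAB : B < A) {a b : ℝ} (ha : 0 ≤ a) (hab : a ≤ b) :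
    0 ≤ ∫ t in a..b, (A - B + B*t) ^ (-γ) * t ^ κ :=
  intervalIntegral.integral_nonneg hab (fun u hu => j_nonneg hB hAB (le_trans ha hu.1))

private lemma J_up3 (hκ : -1 < κ) (hγ : 0 < γ) (h3 : γ < κ + 1) (hB : 0 ≤ B) (hAB : B < A) :
    ∫ t in (0:ℝ)..1, (A - B + B*t) ^ (-γ) * t ^ κ ≤ 1/(κ+1-γ) * A^(-γ) := by
  have hA : 0 < A := lt_of_le_of_lt hB hAB
  have hD : (0:ℝ) < A - B := by linarith
  have hgi : IntervalIntegrable (fun t : ℝ => A ^ (-γ) * t ^ (κ - γ)) volume 0 1 :=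
    (intervalIntegral.intervalIntegrable_rpow' (by linarith)).const_mul _
  have step : ∫ t in (0:ℝ)..1, (A - B + B*t) ^ (-γ) * t ^ κ ≤
      ∫ t in (0:ℝ)..1, A ^ (-γ) * t ^ (κ - γ) := by
    apply integral_mono_Ioc (by norm_num)
      (j_ii hκ hγ hB hAB (le_refl _) (by norm_num) (by norm_num)) hgi
    intro t ht
    obtain ⟨ht1, ht2⟩ := ht
    have hAt : 0 < A * t := mul_pos hA ht1
    have l1 : (A - B + B*t) ^ (-γ) ≤ (A*t) ^ (-γ) := by
      apply rpow_anti hAt ?_ (by linarith)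
      nlinarith [mul_le_mul_of_nonneg_left ht2 hD.le]
    rw [Real.mul_rpow hA.le ht1.le] at l1
    calc (A - B + B*t) ^ (-γ) * t ^ κ ≤ (A^(-γ) * t^(-γ)) * t ^ κ :=
        mul_le_mul_of_nonneg_right l1 (Real.rpow_nonneg ht1.le _)
      _ = A^(-γ) * (t^(-γ) * t^κ) := by ring
      _ = A ^ (-γ) * t ^ (κ - γ) := by
          rw [← Real.rpow_add ht1]
          rw [show -γ + κ = κ - γ by ring]
  have ev : ∫ t in (0:ℝ)..1, A ^ (-γ) * t ^ (κ - γ) = 1/(κ+1-γ) * A^(-γ) := by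
    rw [intervalIntegral.integral_const_mul, integral_rpow (Or.inl (by linarith)),
      Real.zero_rpow (by intro h; linarith [h] : κ - γ + 1 ≠ 0)]
    rw [show ((1:ℝ) ^ (κ-γ+1)) = 1 from Real.one_rpow _]
    ring
  exact step.trans (le_of_eq ev)

private lemma J_split_up (hκ : -1 < κ) (hγ : 0 < γ) (hB : 0 ≤ B) (hAB : B < A) :
    ∫ t in (0:ℝ)..1, (A - B + B*t) ^ (-γ) * t ^ κ ≤
      (A-B) ^ (-γ) * ((A-B)/A) ^ (κ+1) / (κ+1)
        + A ^ (-γ) * ∫ t in ((A-B)/A)..1, t ^ (κ - γ) := by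
  have hA : 0 < A := lt_of_le_of_lt hB hAB
  have hD : (0:ℝ) < A - B := by linarith
  have ht1 : 0 < (A-B)/A := div_pos hD hA
  have ht1' : (A-B)/A ≤ 1 := by
    rw [div_le_one hA]; linarith
  have hsplit : (∫ t in (0:ℝ)..((A-B)/A), (A - B + B*t) ^ (-γ) * t ^ κ)
      + (∫ t in ((A-B)/A)..1, (A - B + B*t) ^ (-γ) * t ^ κ)
      = ∫ t in (0:ℝ)..1, (A - B + B*t) ^ (-γ) * t ^ κ :=
    intervalIntegral.integral_add_adjacent_intervals
      (j_ii hκ hγ hB hAB (le_refl _) ht1.le ht1')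
      (j_ii hκ hγ hB hAB ht1.le ht1' (le_refl _))
  have p1 : ∫ t in (0:ℝ)..((A-B)/A), (A - B + B*t) ^ (-γ) * t ^ κ ≤
      (A-B) ^ (-γ) * ((A-B)/A) ^ (κ+1) / (κ+1) := by
    have hgi : IntervalIntegrable (fun t : ℝ => (A-B) ^ (-γ) * t ^ κ) volume 0 ((A-B)/A) :=
      (intervalIntegral.intervalIntegrable_rpow' hκ).const_mul _
    have step : ∫ t in (0:ℝ)..((A-B)/A), (A - B + B*t) ^ (-γ) * t ^ κ ≤
        ∫ t in (0:ℝ)..((A-B)/A), (A-B) ^ (-γ) * t ^ κ := by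
      apply integral_mono_Ioc ht1.le (j_ii hκ hγ hB hAB (le_refl _) ht1.le ht1') hgi
      intro t ht
      exact mul_le_mul_of_nonneg_right
        (rpow_anti hD (by nlinarith [ht.1]) (by linarith))
        (Real.rpow_nonneg ht.1.le _)
    have ev : ∫ t in (0:ℝ)..((A-B)/A), (A-B) ^ (-γ) * t ^ κ =
        (A-B) ^ (-γ) * ((A-B)/A) ^ (κ+1) / (κ+1) := by
      rw [intervalIntegral.integral_const_mul, integral_rpow (Or.inl hκ),
        Real.zero_rpow (by intro h; linarith [h] : κ + 1 ≠ 0)]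
      ring
    exact step.trans (le_of_eq ev)
  have p2 : ∫ t in ((A-B)/A)..1, (A - B + B*t) ^ (-γ) * t ^ κ ≤
      A ^ (-γ) * ∫ t in ((A-B)/A)..1, t ^ (κ - γ) := by
    rw [← intervalIntegral.integral_const_mul]
    apply integral_mono_Ioc ht1' (j_ii hκ hγ hB hAB ht1.le ht1' (le_refl _))
      ((ii_tpow' ht1 ht1').const_mul _)
    intro t ht
    obtain ⟨ht1a, ht2a⟩ := ht
    have ht0 : 0 < t := lt_trans ht1 ht1a
    have hAt : 0 < A * t := mul_pos hA ht0
    have l1 : (A - B + B*t) ^ (-γ) ≤ (A*t) ^ (-γ) := by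
      apply rpow_anti hAt ?_ (by linarith)
      nlinarith [mul_le_mul_of_nonneg_left ht2a hD.le]
    rw [Real.mul_rpow hA.le ht0.le] at l1
    calc (A - B + B*t) ^ (-γ) * t ^ κ ≤ (A^(-γ) * t^(-γ)) * t ^ κ :=
        mul_le_mul_of_nonneg_right l1 (Real.rpow_nonneg ht0.le _)
      _ = A^(-γ) * (t^(-γ) * t^κ) := by ring
      _ = A ^ (-γ) * t ^ (κ - γ) := by
          rw [← Real.rpow_add ht0, show -γ + κ = κ - γ by ring]
  linarith [hsplit, p1, p2]


private lemma J_low1 (hκ : -1 < κ) (hγ : 0 < γ) (hB : 0 ≤ B) (hAB : B < A)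
    (h2B : A < 2*B) :
    (2:ℝ)^(-γ)/(κ+1) * (A ^ (-(κ+1)) * (A-B) ^ (κ+1-γ)) ≤
      ∫ t in (0:ℝ)..1, (A - B + B*t) ^ (-γ) * t ^ κ := by
  have hA : 0 < A := lt_of_le_of_lt hB hAB
  have hD : (0:ℝ) < A - B := by linarith
  have hBpos : 0 < B := by linarith
  have ht0 : 0 < (A-B)/B := div_pos hD hBpos
  have ht0' : (A-B)/B ≤ 1 := by rw [div_le_one hBpos]; linarith
  have hsplit : (∫ t in (0:ℝ)..((A-B)/B), (A - B + B*t) ^ (-γ) * t ^ κ)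
      + (∫ t in ((A-B)/B)..1, (A - B + B*t) ^ (-γ) * t ^ κ)
      = ∫ t in (0:ℝ)..1, (A - B + B*t) ^ (-γ) * t ^ κ :=
    intervalIntegral.integral_add_adjacent_intervals
      (j_ii hκ hγ hB hAB (le_refl _) ht0.le ht0')
      (j_ii hκ hγ hB hAB ht0.le ht0' (le_refl _))
  have hn2 := J_nonneg (κ := κ) (γ := γ) hB hAB ht0.le ht0'
  have p1 : (2*(A-B)) ^ (-γ) * (((A-B)/B) ^ (κ+1)) / (κ+1) ≤
      ∫ t in (0:ℝ)..((A-B)/B), (A - B + B*t) ^ (-γ) * t ^ κ := by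
    have ev : ∫ t in (0:ℝ)..((A-B)/B), (2*(A-B)) ^ (-γ) * t ^ κ =
        (2*(A-B)) ^ (-γ) * (((A-B)/B) ^ (κ+1)) / (κ+1) := by
      rw [intervalIntegral.integral_const_mul, integral_rpow (Or.inl hκ),
        Real.zero_rpow (by intro h; linarith [h] : κ + 1 ≠ 0)]
      ring
    rw [← ev]
    apply integral_mono_Ioc ht0.le
      ((intervalIntegral.intervalIntegrable_rpow' hκ).const_mul _)
      (j_ii hκ hγ hB hAB (le_refl _) ht0.le ht0')
    intro t ht
    obtain ⟨ht1, ht2⟩ := ht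
    have hbt : B * t ≤ A - B := by
      have := mul_le_mul_of_nonneg_left ht2 hBpos.le
      rwa [mul_div_cancel₀ _ (ne_of_gt hBpos)] at this
    have hbase : 0 < A - B + B*t := by nlinarith
    exact mul_le_mul_of_nonneg_right
      (rpow_anti hbase (by linarith) (by linarith)) (Real.rpow_nonneg ht1.le _)
  have alg : (2:ℝ)^(-γ)/(κ+1) * (A ^ (-(κ+1)) * (A-B) ^ (κ+1-γ)) ≤
      (2*(A-B)) ^ (-γ) * (((A-B)/B) ^ (κ+1)) / (κ+1) := by
    rw [Real.mul_rpow (by norm_num) hD.le, Real.div_rpow hD.le hBpos.le]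
    have e1 : (A-B) ^ (-γ) * ((A-B) ^ (κ+1) / B ^ (κ+1)) =
        (A-B) ^ (κ+1-γ) / B ^ (κ+1) := by
      rw [show (A-B) ^ (κ+1-γ) = (A-B) ^ (-γ) * (A-B) ^ (κ+1) by
        rw [← Real.rpow_add hD]; congr 1; ring]
      ring
    have e2 : A ^ (-(κ+1)) * (A-B) ^ (κ+1-γ) ≤ (A-B) ^ (κ+1-γ) / B ^ (κ+1) := by
      rw [Real.rpow_neg hA.le, div_eq_mul_inv, mul_comm]
      apply mul_le_mul_of_nonneg_left _ (Real.rpow_nonneg hD.le _)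
      apply inv_anti₀ (Real.rpow_pos_of_pos hBpos _)
      exact Real.rpow_le_rpow hBpos.le hAB.le (by linarith)
    calc (2:ℝ)^(-γ)/(κ+1) * (A ^ (-(κ+1)) * (A-B) ^ (κ+1-γ))
        ≤ (2:ℝ)^(-γ)/(κ+1) * ((A-B) ^ (κ+1-γ) / B ^ (κ+1)) := by
          exact mul_le_mul_of_nonneg_left e2
            (div_nonneg (Real.rpow_nonneg (by norm_num) _) (by linarith))
      _ = (2:ℝ)^(-γ) * ((A-B) ^ (-γ) * ((A-B) ^ (κ+1) / B ^ (κ+1))) / (κ+1) := by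
          rw [e1]; ring
      _ = (2:ℝ)^(-γ) * (A-B) ^ (-γ) * ((A-B) ^ (κ+1) / B ^ (κ+1)) / (κ+1) := by ring
  linarith [alg, p1, hn2, hsplit]

private lemma J_low2 (hκ : -1 < κ) (hγ : 0 < γ) (hB : 0 ≤ B) (hAB : B < A)
    (hDB : A - B < B) (hc : γ = κ + 1) :
    (2:ℝ)^(-γ) * A ^ (-γ) * Real.log (B/(A-B)) ≤
      ∫ t in (0:ℝ)..1, (A - B + B*t) ^ (-γ) * t ^ κ := by
  have hA : 0 < A := lt_of_le_of_lt hB hAB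
  have hD : (0:ℝ) < A - B := by linarith
  have hBpos : 0 < B := by linarith
  have ht0 : 0 < (A-B)/B := div_pos hD hBpos
  have ht0' : (A-B)/B ≤ 1 := by rw [div_le_one hBpos]; linarith
  have hsplit : (∫ t in (0:ℝ)..((A-B)/B), (A - B + B*t) ^ (-γ) * t ^ κ)
      + (∫ t in ((A-B)/B)..1, (A - B + B*t) ^ (-γ) * t ^ κ)
      = ∫ t in (0:ℝ)..1, (A - B + B*t) ^ (-γ) * t ^ κ :=
    intervalIntegral.integral_add_adjacent_intervals
      (j_ii hκ hγ hB hAB (le_refl _) ht0.le ht0')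
      (j_ii hκ hγ hB hAB ht0.le ht0' (le_refl _))
  have hn1 := J_nonneg (κ := κ) (γ := γ) hB hAB (le_refl (0:ℝ)) ht0.le
  have p2 : (2*B) ^ (-γ) * Real.log (B/(A-B)) ≤
      ∫ t in ((A-B)/B)..1, (A - B + B*t) ^ (-γ) * t ^ κ := by
    have ev : ∫ t in ((A-B)/B)..1, (2*B) ^ (-γ) * t ^ (-1:ℝ) =
        (2*B) ^ (-γ) * Real.log (B/(A-B)) := by
      rw [intervalIntegral.integral_const_mul, integral_tinv ht0 ht0', one_div_div]
    rw [← ev]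
    apply integral_mono_Ioc ht0' ((ii_tpow' ht0 ht0').const_mul _)
      (j_ii hκ hγ hB hAB ht0.le ht0' (le_refl _))
    intro t ht
    obtain ⟨ht1, ht2⟩ := ht
    have htp : 0 < t := lt_trans ht0 ht1
    have hbt : A - B ≤ B * t := by
      have := mul_le_mul_of_nonneg_left ht1.le hBpos.le
      rwa [mul_div_cancel₀ _ (ne_of_gt hBpos)] at this
    have hbase : 0 < A - B + B*t := by nlinarith
    have l1 : (2*B*t) ^ (-γ) ≤ (A - B + B*t) ^ (-γ) :=
      rpow_anti hbase (by nlinarith) (by linarith)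
    rw [Real.mul_rpow (by positivity) htp.le] at l1
    calc (2*B) ^ (-γ) * t ^ (-1:ℝ)
        = ((2*B) ^ (-γ) * t ^ (-γ)) * t ^ κ := by
          rw [show ((-1:ℝ)) = -γ + κ by rw [hc]; ring, Real.rpow_add htp]
          ring
      _ ≤ (A - B + B*t) ^ (-γ) * t ^ κ :=
          mul_le_mul_of_nonneg_right l1 (Real.rpow_nonneg htp.le _)
  have llog : 0 ≤ Real.log (B/(A-B)) := by
    apply Real.log_nonneg
    rw [le_div_iff₀ hD]
    linarith
  have l2 : (2:ℝ)^(-γ) * A ^ (-γ) * Real.log (B/(A-B)) ≤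
      (2*B) ^ (-γ) * Real.log (B/(A-B)) := by
    apply mul_le_mul_of_nonneg_right _ llog
    rw [← Real.mul_rpow (by norm_num) hA.le]
    exact rpow_anti (by linarith) (by linarith) (by linarith)
  linarith

private lemma I_plus_eq (hκ : -1 < κ) :
    ∫ s in (0:ℝ)..1, (A - B*s) ^ (-γ) * (1 - s^2) ^ κ =
      ∫ t in (0:ℝ)..1, (A - B*(1-t)) ^ (-γ) * (1 - (1-t)^2) ^ κ := by
  have h := intervalIntegral.integral_comp_sub_left (a := (0:ℝ)) (b := 1)
    (fun s : ℝ => (A - B*s) ^ (-γ) * (1 - s^2) ^ κ) 1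
  have h10 : (1:ℝ) - 1 = 0 := by norm_num
  have h11 : (1:ℝ) - 0 = 1 := by norm_num
  rw [h10, h11] at h
  exact h.symm

private lemma jt_ii (hκ : -1 < κ) (hγ : 0 < γ) (hB : 0 ≤ B) (hAB : B < A) :
    IntervalIntegrable (fun t : ℝ => (A - B*(1-t)) ^ (-γ) * (1 - (1-t)^2) ^ κ)
      volume 0 1 := by
  have h := (hsub_ii hκ hγ hB hAB (a := 0) (b := 1)
    (by norm_num) (by norm_num) (le_refl _)).comp_sub_left 1
  have h10 : (1:ℝ) - 1 = 0 := by norm_num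
  have h11 : (1:ℝ) - 0 = 1 := by norm_num
  rw [h10, h11] at h
  exact h.symm

private lemma I_plus_up (hκ : -1 < κ) (hγ : 0 < γ) (hB : 0 ≤ B) (hAB : B < A) :
    ∫ s in (0:ℝ)..1, (A - B*s) ^ (-γ) * (1 - s^2) ^ κ ≤
      max ((1:ℝ)^κ) ((2:ℝ)^κ) *
        ∫ t in (0:ℝ)..1, (A - B + B*t) ^ (-γ) * t ^ κ := by
  rw [I_plus_eq hκ, ← intervalIntegral.integral_const_mul]
  apply integral_mono_Ioc (by norm_num) (jt_ii hκ hγ hB hAB)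
    ((j_ii hκ hγ hB hAB (le_refl _) (by norm_num) (by norm_num)).const_mul _)
  intro t ht
  obtain ⟨ht1, ht2⟩ := ht
  have e1 : A - B*(1-t) = A - B + B*t := by ring
  have e2 : 1 - (1-t)^2 = t * (2-t) := by ring
  rw [e1, e2, Real.mul_rpow ht1.le (by linarith)]
  have hbase : 0 < A - B + B*t := by nlinarith
  have b2 : (2-t) ^ κ ≤ max ((1:ℝ)^κ) ((2:ℝ)^κ) :=
    (rpow_bounds one_pos (by linarith) (by linarith)).2
  calc (A - B + B*t) ^ (-γ) * (t ^ κ * (2-t) ^ κ)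
      = (2-t) ^ κ * ((A - B + B*t) ^ (-γ) * t ^ κ) := by ring
    _ ≤ max ((1:ℝ)^κ) ((2:ℝ)^κ) * ((A - B + B*t) ^ (-γ) * t ^ κ) :=
        mul_le_mul_of_nonneg_right b2 (j_nonneg hB hAB ht1.le)

private lemma I_plus_low (hκ : -1 < κ) (hγ : 0 < γ) (hB : 0 ≤ B) (hAB : B < A) :
    min ((1:ℝ)^κ) ((2:ℝ)^κ) *
        (∫ t in (0:ℝ)..1, (A - B + B*t) ^ (-γ) * t ^ κ) ≤
      ∫ s in (0:ℝ)..1, (A - B*s) ^ (-γ) * (1 - s^2) ^ κ := by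
  rw [I_plus_eq hκ, ← intervalIntegral.integral_const_mul]
  apply integral_mono_Ioc (by norm_num)
    ((j_ii hκ hγ hB hAB (le_refl _) (by norm_num) (by norm_num)).const_mul _)
    (jt_ii hκ hγ hB hAB)
  intro t ht
  obtain ⟨ht1, ht2⟩ := ht
  have e1 : A - B*(1-t) = A - B + B*t := by ring
  have e2 : 1 - (1-t)^2 = t * (2-t) := by ring
  rw [e1, e2, Real.mul_rpow ht1.le (by linarith)]
  have b2 : min ((1:ℝ)^κ) ((2:ℝ)^κ) ≤ (2-t) ^ κ :=
    (rpow_bounds one_pos (by linarith) (by linarith)).1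
  calc min ((1:ℝ)^κ) ((2:ℝ)^κ) * ((A - B + B*t) ^ (-γ) * t ^ κ)
      ≤ (2-t) ^ κ * ((A - B + B*t) ^ (-γ) * t ^ κ) :=
        mul_le_mul_of_nonneg_right b2 (j_nonneg hB hAB ht1.le)
    _ = (A - B + B*t) ^ (-γ) * (t ^ κ * (2-t) ^ κ) := by ring

private lemma I_split (hκ : -1 < κ) (hγ : 0 < γ) (hB : 0 ≤ B) (hAB : B < A) :
    ∫ s in (-1:ℝ)..1, (A - B*s) ^ (-γ) * (1 - s^2) ^ κ =
      (∫ s in (-1:ℝ)..0, (A - B*s) ^ (-γ) * (1 - s^2) ^ κ)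
        + ∫ s in (0:ℝ)..1, (A - B*s) ^ (-γ) * (1 - s^2) ^ κ :=
  (intervalIntegral.integral_add_adjacent_intervals
    (hsub_ii hκ hγ hB hAB (le_refl _) (by norm_num) (by norm_num))
    (hsub_ii hκ hγ hB hAB (by norm_num) (by norm_num) (le_refl _))).symm


private lemma key1 (hA : 0 < A) (hD : 0 < A - B) :
    (A-B) ^ (-γ) * ((A-B)/A) ^ (κ+1) = A ^ (-(κ+1)) * (A-B) ^ (κ+1-γ) := by
  rw [Real.div_rpow hD.le hA.le, Real.rpow_neg hA.le,
    show (A-B) ^ (κ+1-γ) = (A-B) ^ (-γ) * (A-B) ^ (κ+1) by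
      rw [← Real.rpow_add hD]; congr 1; ring]
  ring

private lemma key2 (hA : 0 < A) (hD : 0 < A - B) :
    A ^ (-γ) * ((A-B)/A) ^ (κ-γ+1) = A ^ (-(κ+1)) * (A-B) ^ (κ+1-γ) := by
  rw [Real.div_rpow hD.le hA.le,
    show (A-B) ^ (κ+1-γ) = (A-B) ^ (κ-γ+1) by congr 1; ring,
    show A ^ (-(κ+1)) = A ^ (-γ) / A ^ (κ-γ+1) by
      rw [← Real.rpow_sub hA]; congr 1; ring]
  ring

section Cases
variable (κ γ : ℝ)

private lemma case1 (hκ : -1 < κ) (hγ : 0 < γ) (h1 : κ + 1 < γ) :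
    ∃ c C : ℝ, 0 < c ∧ 0 < C ∧ ∀ A B : ℝ, 0 ≤ B → B < A →
      c * (A ^ (-(κ+1)) * (A-B) ^ (κ+1-γ)) ≤
        (∫ s in (-1:ℝ)..1, (A - B*s) ^ (-γ) * (1 - s^2) ^ κ) ∧
      (∫ s in (-1:ℝ)..1, (A - B*s) ^ (-γ) * (1 - s^2) ^ κ) ≤
        C * (A ^ (-(κ+1)) * (A-B) ^ (κ+1-γ)) := by
  set m0 : ℝ := min ((3/4:ℝ)^κ) ((1:ℝ)^κ) with hm0def
  set m1 : ℝ := min ((1:ℝ)^κ) ((2:ℝ)^κ) with hm1def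
  set M : ℝ := max ((1:ℝ)^κ) ((2:ℝ)^κ) with hMdef
  have hm0 : 0 < m0 := lt_min (by positivity) (by positivity)
  have hm1 : 0 < m1 := lt_min (by positivity) (by positivity)
  have hM : 0 < M := lt_of_lt_of_le (by positivity) (le_max_left _ _)
  refine ⟨min (m0 * (2:ℝ)^(-γ)/2 * (2:ℝ)^(κ+1-γ)) (m1 * ((2:ℝ)^(-γ)/(κ+1))),
    M/(κ+1) + M * (1/(κ+1) + 1/(γ-κ-1)),
    lt_min (by positivity) (mul_pos hm1 (div_pos (by positivity) (by linarith))),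
    add_pos (div_pos hM (by linarith)) (mul_pos hM (add_pos
      (div_pos one_pos (by linarith)) (div_pos one_pos (by linarith)))), ?_⟩
  intro A B hB hAB
  have hA : 0 < A := lt_of_le_of_lt hB hAB
  have hD : (0:ℝ) < A - B := by linarith
  have hT : 0 ≤ A ^ (-(κ+1)) * (A-B) ^ (κ+1-γ) :=
    mul_nonneg (Real.rpow_nonneg hA.le _) (Real.rpow_nonneg hD.le _)
  constructor
  · -- lower bound
    rcases le_or_gt (2*B) A with hc | hc
    · -- B small
      have hAhalf : 0 < A/2 := by linarith
      have e1 : (A-B) ^ (κ+1-γ) ≤ (A/2) ^ (κ+1-γ) :=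
        rpow_anti hAhalf (by linarith) (by linarith)
      have e2 : (A/2) ^ (κ+1-γ) = A ^ (κ+1-γ) / (2:ℝ)^(κ+1-γ) :=
        Real.div_rpow hA.le (by norm_num : (0:ℝ) ≤ 2) _
      have e3 : A ^ (-(κ+1)) * A ^ (κ+1-γ) = A ^ (-γ) := by
        rw [← Real.rpow_add hA]; congr 1; ring
      have hlow := I_low (A := A) (B := B) hκ hγ hB hAB
      have step : min (m0 * (2:ℝ)^(-γ)/2 * (2:ℝ)^(κ+1-γ)) (m1 * ((2:ℝ)^(-γ)/(κ+1)))
          * (A ^ (-(κ+1)) * (A-B) ^ (κ+1-γ)) ≤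
          (m0 * (2:ℝ)^(-γ)/2 * (2:ℝ)^(κ+1-γ)) * (A ^ (-(κ+1)) * (A/2) ^ (κ+1-γ)) := by
        apply mul_le_mul (min_le_left _ _)
          (mul_le_mul_of_nonneg_left e1 (Real.rpow_nonneg hA.le _)) hT
          (by positivity)
      refine step.trans ?_
      rw [e2, show A ^ (-(κ+1)) * (A ^ (κ+1-γ) / (2:ℝ)^(κ+1-γ))
        = (A ^ (-(κ+1)) * A ^ (κ+1-γ)) / (2:ℝ)^(κ+1-γ) by ring, e3]
      have h2pos : (0:ℝ) < (2:ℝ)^(κ+1-γ) := Real.rpow_pos_of_pos (by norm_num) _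
      rw [show m0 * (2:ℝ)^(-γ)/2 * (2:ℝ)^(κ+1-γ) * (A ^ (-γ) / (2:ℝ)^(κ+1-γ))
        = m0 * (2:ℝ)^(-γ)/2 * A ^ (-γ) * ((2:ℝ)^(κ+1-γ) / (2:ℝ)^(κ+1-γ)) by ring,
        div_self (ne_of_gt h2pos), mul_one]
      exact hlow
    · -- B large
      have hJ := J_low1 (A := A) (B := B) hκ hγ hB hAB hc
      have hIp := I_plus_low (A := A) (B := B) hκ hγ hB hAB
      have hIm := I_nonneg (κ := κ) (γ := γ) hB hAB
        (le_refl (-1:ℝ)) (by norm_num) (by norm_num : (-1:ℝ) ≤ 0)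
      have hsplit := I_split (A := A) (B := B) hκ hγ hB hAB
      have c1 : min (m0 * (2:ℝ)^(-γ)/2 * (2:ℝ)^(κ+1-γ)) (m1 * ((2:ℝ)^(-γ)/(κ+1)))
          * (A ^ (-(κ+1)) * (A-B) ^ (κ+1-γ)) ≤
          m1 * ((2:ℝ)^(-γ)/(κ+1) * (A ^ (-(κ+1)) * (A-B) ^ (κ+1-γ))) := by
        have := mul_le_mul_of_nonneg_right
          (min_le_right (m0 * (2:ℝ)^(-γ)/2 * (2:ℝ)^(κ+1-γ)) (m1 * ((2:ℝ)^(-γ)/(κ+1)))) hT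
        calc min (m0 * (2:ℝ)^(-γ)/2 * (2:ℝ)^(κ+1-γ)) (m1 * ((2:ℝ)^(-γ)/(κ+1)))
            * (A ^ (-(κ+1)) * (A-B) ^ (κ+1-γ))
            ≤ (m1 * ((2:ℝ)^(-γ)/(κ+1))) * (A ^ (-(κ+1)) * (A-B) ^ (κ+1-γ)) := this
          _ = m1 * ((2:ℝ)^(-γ)/(κ+1) * (A ^ (-(κ+1)) * (A-B) ^ (κ+1-γ))) := by ring
      have c2 : m1 * ((2:ℝ)^(-γ)/(κ+1) * (A ^ (-(κ+1)) * (A-B) ^ (κ+1-γ))) ≤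
          m1 * ∫ t in (0:ℝ)..1, (A - B + B*t) ^ (-γ) * t ^ κ :=
        mul_le_mul_of_nonneg_left hJ hm1.le
      linarith
  · -- upper bound
    have hIm := I_minus_up (A := A) (B := B) hκ hγ hB hAB
    have hIp := I_plus_up (A := A) (B := B) hκ hγ hB hAB
    have hsplit := I_split (A := A) (B := B) hκ hγ hB hAB
    have hgA : A ^ (-γ) ≤ A ^ (-(κ+1)) * (A-B) ^ (κ+1-γ) := by
      rw [show A ^ (-γ) = A ^ (-(κ+1)) * A ^ (κ+1-γ) by
        rw [← Real.rpow_add hA]; congr 1; ring]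
      exact mul_le_mul_of_nonneg_left
        (rpow_anti hD (by linarith) (by linarith)) (Real.rpow_nonneg hA.le _)
    have hJup : (∫ t in (0:ℝ)..1, (A - B + B*t) ^ (-γ) * t ^ κ) ≤
        (1/(κ+1) + 1/(γ-κ-1)) * (A ^ (-(κ+1)) * (A-B) ^ (κ+1-γ)) := by
      have hS := J_split_up (A := A) (B := B) hκ hγ hB hAB
      have ht1 : 0 < (A-B)/A := div_pos hD hA
      have ht1' : (A-B)/A ≤ 1 := by rw [div_le_one hA]; linarith
      have tail : (∫ t in ((A-B)/A)..1, t ^ (κ - γ)) ≤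
          ((A-B)/A) ^ (κ-γ+1) / (γ-κ-1) := by
        rw [integral_tpow' (by intro h; linarith [h] : κ - γ ≠ -1) ht1 ht1']
        rw [show ((1:ℝ) ^ (κ-γ+1)) = 1 from Real.one_rpow _]
        have hq : (0:ℝ) < γ-κ-1 := by linarith
        have e : (1 - ((A-B)/A) ^ (κ-γ+1))/(κ-γ+1)
            = (((A-B)/A) ^ (κ-γ+1) - 1)/(γ-κ-1) := by
          rw [div_eq_div_iff (by linarith) (by linarith)]
          ring
        rw [e]
        exact (div_le_div_iff_of_pos_right hq).2 (by linarith)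
      have k1 := key1 (κ := κ) (γ := γ) (A := A) (B := B) hA hD
      have k2 := key2 (κ := κ) (γ := γ) (A := A) (B := B) hA hD
      have hAp : 0 ≤ A ^ (-γ) := Real.rpow_nonneg hA.le _
      calc (∫ t in (0:ℝ)..1, (A - B + B*t) ^ (-γ) * t ^ κ)
          ≤ (A-B) ^ (-γ) * ((A-B)/A) ^ (κ+1) / (κ+1)
            + A ^ (-γ) * ∫ t in ((A-B)/A)..1, t ^ (κ - γ) := hS
        _ ≤ (A-B) ^ (-γ) * ((A-B)/A) ^ (κ+1) / (κ+1)
            + A ^ (-γ) * (((A-B)/A) ^ (κ-γ+1) / (γ-κ-1)) :=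
            add_le_add le_rfl (mul_le_mul_of_nonneg_left tail hAp)
        _ = (A ^ (-(κ+1)) * (A-B) ^ (κ+1-γ)) / (κ+1)
            + (A ^ (-(κ+1)) * (A-B) ^ (κ+1-γ)) / (γ-κ-1) := by
            rw [show (A-B) ^ (-γ) * ((A-B)/A) ^ (κ+1) / (κ+1)
                + A ^ (-γ) * (((A-B)/A) ^ (κ-γ+1) / (γ-κ-1))
                = ((A-B) ^ (-γ) * ((A-B)/A) ^ (κ+1)) / (κ+1)
                + (A ^ (-γ) * ((A-B)/A) ^ (κ-γ+1)) / (γ-κ-1) by ring, k1, k2]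
        _ = (1/(κ+1) + 1/(γ-κ-1)) * (A ^ (-(κ+1)) * (A-B) ^ (κ+1-γ)) := by ring
    have s1 : (∫ s in (-1:ℝ)..0, (A - B*s) ^ (-γ) * (1 - s^2) ^ κ) ≤
        M/(κ+1) * (A ^ (-(κ+1)) * (A-B) ^ (κ+1-γ)) := by
      refine hIm.trans ?_
      exact mul_le_mul_of_nonneg_left hgA (div_nonneg hM.le (by linarith))
    have s2 : (∫ s in (0:ℝ)..1, (A - B*s) ^ (-γ) * (1 - s^2) ^ κ) ≤
        M * ((1/(κ+1) + 1/(γ-κ-1)) * (A ^ (-(κ+1)) * (A-B) ^ (κ+1-γ))) :=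
      hIp.trans (mul_le_mul_of_nonneg_left hJup hM.le)
    rw [hsplit]
    calc (∫ s in (-1:ℝ)..0, (A - B*s) ^ (-γ) * (1 - s^2) ^ κ)
        + (∫ s in (0:ℝ)..1, (A - B*s) ^ (-γ) * (1 - s^2) ^ κ)
        ≤ M/(κ+1) * (A ^ (-(κ+1)) * (A-B) ^ (κ+1-γ))
          + M * ((1/(κ+1) + 1/(γ-κ-1)) * (A ^ (-(κ+1)) * (A-B) ^ (κ+1-γ))) :=
          add_le_add s1 s2
      _ = (M/(κ+1) + M * (1/(κ+1) + 1/(γ-κ-1))) * (A ^ (-(κ+1)) * (A-B) ^ (κ+1-γ)) := by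
          ring


private lemma case3 (hκ : -1 < κ) (hγ : 0 < γ) (h3 : γ < κ + 1) :
    ∃ c C : ℝ, 0 < c ∧ 0 < C ∧ ∀ A B : ℝ, 0 ≤ B → B < A →
      c * A ^ (-γ) ≤ (∫ s in (-1:ℝ)..1, (A - B*s) ^ (-γ) * (1 - s^2) ^ κ) ∧
      (∫ s in (-1:ℝ)..1, (A - B*s) ^ (-γ) * (1 - s^2) ^ κ) ≤ C * A ^ (-γ) := by
  set m0 : ℝ := min ((3/4:ℝ)^κ) ((1:ℝ)^κ) with hm0def
  set M : ℝ := max ((1:ℝ)^κ) ((2:ℝ)^κ) with hMdef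
  have hm0 : 0 < m0 := lt_min (by positivity) (by positivity)
  have hM : 0 < M := lt_of_lt_of_le (by positivity) (le_max_left _ _)
  refine ⟨m0 * (2:ℝ)^(-γ)/2, M/(κ+1) + M * (1/(κ+1-γ)),
    by positivity,
    add_pos (div_pos hM (by linarith)) (mul_pos hM (div_pos one_pos (by linarith))), ?_⟩
  intro A B hB hAB
  have hA : 0 < A := lt_of_le_of_lt hB hAB
  constructor
  · exact I_low hκ hγ hB hAB
  · have hIm := I_minus_up (A := A) (B := B) hκ hγ hB hAB
    have hIp := I_plus_up (A := A) (B := B) hκ hγ hB hAB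
    have hsplit := I_split (A := A) (B := B) hκ hγ hB hAB
    have hJ := J_up3 (A := A) (B := B) hκ hγ h3 hB hAB
    have s2 : (∫ s in (0:ℝ)..1, (A - B*s) ^ (-γ) * (1 - s^2) ^ κ) ≤
        M * (1/(κ+1-γ) * A ^ (-γ)) :=
      hIp.trans (mul_le_mul_of_nonneg_left hJ hM.le)
    rw [hsplit]
    calc (∫ s in (-1:ℝ)..0, (A - B*s) ^ (-γ) * (1 - s^2) ^ κ)
        + (∫ s in (0:ℝ)..1, (A - B*s) ^ (-γ) * (1 - s^2) ^ κ)
        ≤ M/(κ+1) * A ^ (-γ) + M * (1/(κ+1-γ) * A ^ (-γ)) := add_le_add hIm s2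
      _ = (M/(κ+1) + M * (1/(κ+1-γ))) * A ^ (-γ) := by ring

private lemma case2 (hκ : -1 < κ) (hγ : 0 < γ) (hc : γ = κ + 1) :
    ∃ c C : ℝ, 0 < c ∧ 0 < C ∧ ∀ A B : ℝ, 0 ≤ B → B < A →
      c * (A ^ (-γ) * (1 + logPlus (B/(A-B)))) ≤
        (∫ s in (-1:ℝ)..1, (A - B*s) ^ (-γ) * (1 - s^2) ^ κ) ∧
      (∫ s in (-1:ℝ)..1, (A - B*s) ^ (-γ) * (1 - s^2) ^ κ) ≤
        C * (A ^ (-γ) * (1 + logPlus (B/(A-B)))) := by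
  set m0 : ℝ := min ((3/4:ℝ)^κ) ((1:ℝ)^κ) with hm0def
  set m1 : ℝ := min ((1:ℝ)^κ) ((2:ℝ)^κ) with hm1def
  set M : ℝ := max ((1:ℝ)^κ) ((2:ℝ)^κ) with hMdef
  have hm0 : 0 < m0 := lt_min (by positivity) (by positivity)
  have hm1 : 0 < m1 := lt_min (by positivity) (by positivity)
  have hM : 0 < M := lt_of_lt_of_le (by positivity) (le_max_left _ _)
  have hl2 : (0:ℝ) < Real.log 2 := Real.log_pos (by norm_num)
  refine ⟨min (m0 * (2:ℝ)^(-γ)/2) (m1 * (2:ℝ)^(-γ)),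
    M/(κ+1) + M * (1/γ + Real.log 2 + 1),
    lt_min (by positivity) (by positivity),
    add_pos (div_pos hM (by linarith)) (mul_pos hM (by positivity)), ?_⟩
  intro A B hB hAB
  have hA : 0 < A := lt_of_le_of_lt hB hAB
  have hD : (0:ℝ) < A - B := by linarith
  have hlp : 0 ≤ logPlus (B/(A-B)) := le_max_right _ _
  have hApos : (0:ℝ) < A ^ (-γ) := Real.rpow_pos_of_pos hA _
  constructor
  · -- lower bound
    rcases le_or_gt B (A-B) with hcase | hcase
    · -- logPlus = 0
      have hlp0 : logPlus (B/(A-B)) = 0 := by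
        apply max_eq_right
        apply Real.log_nonpos (by positivity)
        rw [div_le_one hD]
        exact hcase
      rw [hlp0]
      have hlow := I_low (A := A) (B := B) hκ hγ hB hAB
      calc min (m0 * (2:ℝ)^(-γ)/2) (m1 * (2:ℝ)^(-γ)) * (A ^ (-γ) * (1+0))
          ≤ (m0 * (2:ℝ)^(-γ)/2) * (A ^ (-γ) * (1+0)) :=
            mul_le_mul_of_nonneg_right (min_le_left _ _) (by positivity)
        _ = m0 * (2:ℝ)^(-γ)/2 * A ^ (-γ) := by ring
        _ ≤ _ := hlow
    · -- logPlus = log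
      have hlpl : logPlus (B/(A-B)) = Real.log (B/(A-B)) := by
        apply max_eq_left
        apply Real.log_nonneg
        rw [le_div_iff₀ hD]
        linarith
      have hL : 0 ≤ Real.log (B/(A-B)) := by rw [← hlpl]; exact hlp
      have hJ := J_low2 (A := A) (B := B) hκ hγ hB hAB hcase hc
      have hIp := I_plus_low (A := A) (B := B) hκ hγ hB hAB
      have hsplit := I_split (A := A) (B := B) hκ hγ hB hAB
      have hIm := I_minus_low (A := A) (B := B) hκ hγ hB hAB
      rw [hlpl]
      have b1 : min (m0 * (2:ℝ)^(-γ)/2) (m1 * (2:ℝ)^(-γ))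
          * (A ^ (-γ) * (1 + Real.log (B/(A-B))))
          ≤ (m0 * (2:ℝ)^(-γ)/2) * A^(-γ)
            + (m1 * (2:ℝ)^(-γ)) * (A^(-γ) * Real.log (B/(A-B))) := by
        have h1 := min_le_left (m0 * (2:ℝ)^(-γ)/2) (m1 * (2:ℝ)^(-γ))
        have h2 := min_le_right (m0 * (2:ℝ)^(-γ)/2) (m1 * (2:ℝ)^(-γ))
        have hXL : 0 ≤ A^(-γ) * Real.log (B/(A-B)) := mul_nonneg hApos.le hL
        nlinarith [mul_le_mul_of_nonneg_right h1 hApos.le,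
          mul_le_mul_of_nonneg_right h2 hXL]
      have p1 : (m1 * (2:ℝ)^(-γ)) * (A^(-γ) * Real.log (B/(A-B))) ≤
          m1 * ∫ t in (0:ℝ)..1, (A - B + B*t) ^ (-γ) * t ^ κ := by
        calc (m1 * (2:ℝ)^(-γ)) * (A^(-γ) * Real.log (B/(A-B)))
            = m1 * ((2:ℝ)^(-γ) * A^(-γ) * Real.log (B/(A-B))) := by ring
          _ ≤ m1 * ∫ t in (0:ℝ)..1, (A - B + B*t) ^ (-γ) * t ^ κ :=
              mul_le_mul_of_nonneg_left hJ hm1.le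
      linarith
  · -- upper bound
    have hIm := I_minus_up (A := A) (B := B) hκ hγ hB hAB
    have hIp := I_plus_up (A := A) (B := B) hκ hγ hB hAB
    have hsplit := I_split (A := A) (B := B) hκ hγ hB hAB
    have ht1 : 0 < (A-B)/A := div_pos hD hA
    have ht1' : (A-B)/A ≤ 1 := by rw [div_le_one hA]; linarith
    have hJ2 : (∫ t in (0:ℝ)..1, (A - B + B*t) ^ (-γ) * t ^ κ) ≤
        A^(-γ) * (1/γ) + A^(-γ) * Real.log (A/(A-B)) := by
      have hS := J_split_up (A := A) (B := B) hκ hγ hB hAB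
      have tail : (∫ t in ((A-B)/A)..1, t ^ (κ - γ)) = Real.log (A/(A-B)) := by
        rw [show κ - γ = -1 by rw [hc]; ring]
        rw [integral_tinv ht1 ht1', one_div_div]
      have first : (A-B) ^ (-γ) * ((A-B)/A) ^ (κ+1) = A ^ (-γ) := by
        rw [key1 (κ := κ) (γ := γ) hA hD, show κ+1-γ = 0 by rw [hc]; ring,
          Real.rpow_zero, mul_one, show -(κ+1) = -γ by rw [hc]]
      rw [tail, first] at hS
      calc (∫ t in (0:ℝ)..1, (A - B + B*t) ^ (-γ) * t ^ κ)
          ≤ A ^ (-γ) / (κ+1) + A ^ (-γ) * Real.log (A/(A-B)) := hS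
        _ = A^(-γ) * (1/γ) + A^(-γ) * Real.log (A/(A-B)) := by
            rw [← hc]; ring
    have hlog : Real.log (A/(A-B)) ≤ Real.log 2 + logPlus (B/(A-B)) := by
      rcases le_or_gt B (A-B) with h | h
      · have h1 : A/(A-B) ≤ 2 := by rw [div_le_iff₀ hD]; linarith
        have h2 := Real.log_le_log (by positivity) h1
        linarith [hlp]
      · have hBpos : 0 < B := by linarith
        have h1 : A/(A-B) ≤ 2*(B/(A-B)) := by
          rw [show 2*(B/(A-B)) = 2*B/(A-B) by ring]
          exact (div_le_div_iff_of_pos_right hD).2 (by linarith)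
        have h2 := Real.log_le_log (by positivity) h1
        rw [Real.log_mul (by norm_num) (by positivity)] at h2
        have h3 : logPlus (B/(A-B)) = Real.log (B/(A-B)) :=
          max_eq_left (Real.log_nonneg (by rw [le_div_iff₀ hD]; linarith))
        linarith
    rw [hsplit]
    have s2 : (∫ s in (0:ℝ)..1, (A - B*s) ^ (-γ) * (1 - s^2) ^ κ) ≤
        M * (A^(-γ) * (1/γ) + A^(-γ) * Real.log (A/(A-B))) :=
      hIp.trans (mul_le_mul_of_nonneg_left hJ2 hM.le)
    have s3 : M * (A^(-γ) * Real.log (A/(A-B))) ≤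
        M * (A^(-γ) * (Real.log 2 + logPlus (B/(A-B)))) :=
      mul_le_mul_of_nonneg_left (mul_le_mul_of_nonneg_left hlog hApos.le) hM.le
    have f1 : 0 ≤ M * A^(-γ) := mul_nonneg hM.le hApos.le
    have f2 : 0 ≤ (M/(κ+1)) * (A^(-γ) * logPlus (B/(A-B))) :=
      mul_nonneg (div_nonneg hM.le (by linarith)) (mul_nonneg hApos.le hlp)
    have f3 : 0 ≤ (M*(1/γ)) * (A^(-γ) * logPlus (B/(A-B))) :=
      mul_nonneg (mul_nonneg hM.le (by positivity)) (mul_nonneg hApos.le hlp)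
    have f4 : 0 ≤ (M*Real.log 2) * (A^(-γ) * logPlus (B/(A-B))) :=
      mul_nonneg (mul_nonneg hM.le hl2.le) (mul_nonneg hApos.le hlp)
    nlinarith [hIm, s2, s3, f1, f2, f3, f4]

end Cases
end Core

private lemma int_dirac {f : ℝ → ℝ} (hf : Measurable f) (a : ℝ) :
    Integrable f (Measure.dirac a) := by
  refine ⟨hf.aestronglyMeasurable, ?_⟩
  simp [MeasureTheory.HasFiniteIntegral, MeasureTheory.lintegral_dirac]

private lemma G_dirac (γ A B : ℝ) :
    ∫ s, (A - B*s) ^ (-γ) ∂(piMeasure (-1/2)) =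
      (1/2) * ((A + B) ^ (-γ) + (A - B) ^ (-γ)) := by
  rw [piMeasure, if_pos rfl, MeasureTheory.integral_smul_measure,
    MeasureTheory.integral_add_measure (int_dirac (by fun_prop) _) (int_dirac (by fun_prop) _),
    MeasureTheory.integral_dirac, MeasureTheory.integral_dirac]
  norm_num

private lemma G_eq (ν γ A B : ℝ) (hν : -1/2 < ν) :
    ∫ s, (A - B*s) ^ (-γ) ∂(piMeasure ν) =
      (Real.Gamma (ν+1) / (Real.sqrt π * Real.Gamma (ν+1/2))) *
        ∫ s in (-1:ℝ)..1, (A - B*s) ^ (-γ) * (1 - s^2) ^ (ν - 1/2) := by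
  have hc : 0 < Real.Gamma (ν+1) / (Real.sqrt π * Real.Gamma (ν+1/2)) :=
    div_pos (Real.Gamma_pos_of_pos (by linarith))
      (mul_pos (Real.sqrt_pos.mpr Real.pi_pos) (Real.Gamma_pos_of_pos (by linarith)))
  rw [piMeasure, if_neg (by intro h; rw [h] at hν; norm_num at hν)]
  rw [show (fun u : ℝ => ENNReal.ofReal
      ((Real.Gamma (ν+1) / (Real.sqrt π * Real.Gamma (ν+1/2))) * (1-u^2) ^ (ν-1/2)))
      = fun u : ℝ => ((Real.toNNReal ((Real.Gamma (ν+1) / (Real.sqrt π * Real.Gamma (ν+1/2)))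
        * (1-u^2) ^ (ν-1/2)) : ℝ≥0) : ℝ≥0∞) from rfl]
  rw [integral_withDensity_eq_integral_smul (by fun_prop)]
  rw [intervalIntegral.integral_of_le (by norm_num : (-1:ℝ) ≤ 1),
    MeasureTheory.integral_Ioc_eq_integral_Ioo, ← MeasureTheory.integral_const_mul]
  apply MeasureTheory.setIntegral_congr_fun measurableSet_Ioo
  intro s hs
  have h1 : 0 ≤ (1 - s^2:ℝ) := by nlinarith [hs.1, hs.2]
  show (Real.toNNReal _ : ℝ≥0) • ((A - B*s) ^ (-γ)) = _
  rw [NNReal.smul_def, Real.coe_toNNReal _ (mul_nonneg hc.le (Real.rpow_nonneg h1 _)),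
    smul_eq_mul]
  ring

/-- two-sided estimates for `G(A,B) = ∫ (A−Bs)^{−γ} dΠ_ν(s)`, uniform in
`A > B ≥ 0`. -/
theorem piMeasure_integral_two_sided_estimates
    (ν γ : ℝ) (hν : -1/2 ≤ ν) (hγ : 0 < γ) :
    ∃ c C : ℝ, 0 < c ∧ c ≤ C ∧ ∀ A B : ℝ, 0 ≤ B → B < A →
      (ν + 1/2 < γ →
        c * (A ^ (-ν - 1/2) * (A - B) ^ (-γ + ν + 1/2)) ≤
          (∫ s, (A - B * s) ^ (-γ) ∂(piMeasure ν)) ∧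
        (∫ s, (A - B * s) ^ (-γ) ∂(piMeasure ν)) ≤
          C * (A ^ (-ν - 1/2) * (A - B) ^ (-γ + ν + 1/2))) ∧
      (γ = ν + 1/2 →
        c * (A ^ (-ν - 1/2) * (1 + logPlus (B / (A - B)))) ≤
          (∫ s, (A - B * s) ^ (-γ) ∂(piMeasure ν)) ∧
        (∫ s, (A - B * s) ^ (-γ) ∂(piMeasure ν)) ≤
          C * (A ^ (-ν - 1/2) * (1 + logPlus (B / (A - B))))) ∧
      (γ < ν + 1/2 →
        c * A ^ (-γ) ≤ (∫ s, (A - B * s) ^ (-γ) ∂(piMeasure ν)) ∧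
        (∫ s, (A - B * s) ^ (-γ) ∂(piMeasure ν)) ≤ C * A ^ (-γ)) := by
  rcases eq_or_lt_of_le hν with hq | hq
  · -- ν = -1/2
    refine ⟨1/2, 1, by norm_num, by norm_num, ?_⟩
    intro A B hB hAB
    have hD : (0:ℝ) < A - B := by linarith
    have hG := G_dirac γ A B
    rw [← hq]
    refine ⟨?_, ?_, ?_⟩
    · intro _
      have e1 : A ^ (-(-1/2:ℝ) - 1/2) = 1 := by norm_num
      have e2 : (A-B) ^ (-γ + (-1/2:ℝ) + 1/2) = (A-B) ^ (-γ) := by norm_num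
      rw [hG, e1, e2, one_mul]
      constructor
      · have : 0 ≤ (A+B) ^ (-γ) := Real.rpow_nonneg (by linarith) _
        linarith
      · have : (A+B) ^ (-γ) ≤ (A-B) ^ (-γ) := rpow_anti hD (by linarith) (by linarith)
        linarith
    · intro h
      norm_num at h
      linarith
    · intro h
      norm_num at h
      linarith
  · -- ν > -1/2
    have hκ : -1 < ν - 1/2 := by linarith
    obtain ⟨Cν, hCνdef⟩ : ∃ x : ℝ, x = Real.Gamma (ν+1) / (Real.sqrt π * Real.Gamma (ν+1/2)) :=
      ⟨_, rfl⟩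
    have hCν : 0 < Cν := by
      rw [hCνdef]
      exact div_pos (Real.Gamma_pos_of_pos (by linarith))
        (mul_pos (Real.sqrt_pos.mpr Real.pi_pos) (Real.Gamma_pos_of_pos (by linarith)))
    rcases lt_trichotomy γ (ν + 1/2) with ht | ht | ht
    · -- γ < ν + 1/2
      obtain ⟨c, C, hc, hC, hbnd⟩ := case3 (ν - 1/2) γ hκ hγ (by linarith)
      refine ⟨min (Cν*c) (Cν*C), max (Cν*c) (Cν*C),
        lt_min (mul_pos hCν hc) (mul_pos hCν hC), min_le_max, ?_⟩
      intro A B hB hAB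
      have hA : 0 < A := lt_of_le_of_lt hB hAB
      obtain ⟨hlow, hup⟩ := hbnd A B hB hAB
      have hGeq := G_eq ν γ A B hq
      rw [← hCνdef] at hGeq
      refine ⟨fun h => by linarith, fun h => by linarith, fun _ => ?_⟩
      have hT : (0:ℝ) ≤ A ^ (-γ) := Real.rpow_nonneg hA.le _
      constructor
      · calc min (Cν*c) (Cν*C) * A ^ (-γ) ≤ (Cν*c) * A ^ (-γ) :=
            mul_le_mul_of_nonneg_right (min_le_left _ _) hT
          _ = Cν * (c * A ^ (-γ)) := by ring
          _ ≤ Cν * ∫ s in (-1:ℝ)..1, (A - B*s) ^ (-γ) * (1 - s^2) ^ (ν - 1/2) :=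
            mul_le_mul_of_nonneg_left hlow hCν.le
          _ = _ := hGeq.symm
      · calc (∫ s, (A - B * s) ^ (-γ) ∂(piMeasure ν))
            = Cν * ∫ s in (-1:ℝ)..1, (A - B*s) ^ (-γ) * (1 - s^2) ^ (ν - 1/2) := hGeq
          _ ≤ Cν * (C * A ^ (-γ)) := mul_le_mul_of_nonneg_left hup hCν.le
          _ = (Cν*C) * A ^ (-γ) := by ring
          _ ≤ max (Cν*c) (Cν*C) * A ^ (-γ) :=
            mul_le_mul_of_nonneg_right (le_max_right _ _) hT
    · -- γ = ν + 1/2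
      obtain ⟨c, C, hc, hC, hbnd⟩ := case2 (ν - 1/2) γ hκ hγ (by linarith)
      refine ⟨min (Cν*c) (Cν*C), max (Cν*c) (Cν*C),
        lt_min (mul_pos hCν hc) (mul_pos hCν hC), min_le_max, ?_⟩
      intro A B hB hAB
      have hA : 0 < A := lt_of_le_of_lt hB hAB
      obtain ⟨hlow, hup⟩ := hbnd A B hB hAB
      have hGeq := G_eq ν γ A B hq
      rw [← hCνdef] at hGeq
      refine ⟨fun h => by linarith, fun _ => ?_, fun h => by linarith⟩
      have e1 : A ^ (-ν - 1/2) = A ^ (-γ) := by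
        rw [show -ν - 1/2 = -γ by rw [ht]; ring]
      rw [e1]
      have hT : (0:ℝ) ≤ A ^ (-γ) * (1 + logPlus (B/(A-B))) :=
        mul_nonneg (Real.rpow_nonneg hA.le _)
          (add_nonneg zero_le_one (le_max_right _ _))
      constructor
      · calc min (Cν*c) (Cν*C) * (A ^ (-γ) * (1 + logPlus (B/(A-B))))
            ≤ (Cν*c) * (A ^ (-γ) * (1 + logPlus (B/(A-B)))) :=
            mul_le_mul_of_nonneg_right (min_le_left _ _) hT
          _ = Cν * (c * (A ^ (-γ) * (1 + logPlus (B/(A-B))))) := by ring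
          _ ≤ Cν * ∫ s in (-1:ℝ)..1, (A - B*s) ^ (-γ) * (1 - s^2) ^ (ν - 1/2) :=
            mul_le_mul_of_nonneg_left hlow hCν.le
          _ = _ := hGeq.symm
      · calc (∫ s, (A - B * s) ^ (-γ) ∂(piMeasure ν))
            = Cν * ∫ s in (-1:ℝ)..1, (A - B*s) ^ (-γ) * (1 - s^2) ^ (ν - 1/2) := hGeq
          _ ≤ Cν * (C * (A ^ (-γ) * (1 + logPlus (B/(A-B))))) :=
            mul_le_mul_of_nonneg_left hup hCν.le
          _ = (Cν*C) * (A ^ (-γ) * (1 + logPlus (B/(A-B)))) := by ring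
          _ ≤ max (Cν*c) (Cν*C) * (A ^ (-γ) * (1 + logPlus (B/(A-B)))) :=
            mul_le_mul_of_nonneg_right (le_max_right _ _) hT
    · -- γ > ν + 1/2
      obtain ⟨c, C, hc, hC, hbnd⟩ := case1 (ν - 1/2) γ hκ hγ (by linarith)
      refine ⟨min (Cν*c) (Cν*C), max (Cν*c) (Cν*C),
        lt_min (mul_pos hCν hc) (mul_pos hCν hC), min_le_max, ?_⟩
      intro A B hB hAB
      have hA : 0 < A := lt_of_le_of_lt hB hAB
      have hD : (0:ℝ) < A - B := by linarith
      obtain ⟨hlow, hup⟩ := hbnd A B hB hAB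
      have hGeq := G_eq ν γ A B hq
      rw [← hCνdef] at hGeq
      refine ⟨fun _ => ?_, fun h => by linarith, fun h => by linarith⟩
      have e1 : A ^ (-ν - 1/2) = A ^ (-((ν-1/2)+1)) := by
        rw [show -ν - 1/2 = -((ν-1/2)+1) by ring]
      have e2 : (A-B) ^ (-γ + ν + 1/2) = (A-B) ^ ((ν-1/2)+1-γ) := by
        rw [show -γ + ν + 1/2 = (ν-1/2)+1-γ by ring]
      rw [e1, e2]
      have hT : (0:ℝ) ≤ A ^ (-((ν-1/2)+1)) * (A-B) ^ ((ν-1/2)+1-γ) :=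
        mul_nonneg (Real.rpow_nonneg hA.le _) (Real.rpow_nonneg hD.le _)
      constructor
      · calc min (Cν*c) (Cν*C) * (A ^ (-((ν-1/2)+1)) * (A-B) ^ ((ν-1/2)+1-γ))
            ≤ (Cν*c) * (A ^ (-((ν-1/2)+1)) * (A-B) ^ ((ν-1/2)+1-γ)) :=
            mul_le_mul_of_nonneg_right (min_le_left _ _) hT
          _ = Cν * (c * (A ^ (-((ν-1/2)+1)) * (A-B) ^ ((ν-1/2)+1-γ))) := by ring
          _ ≤ Cν * ∫ s in (-1:ℝ)..1, (A - B*s) ^ (-γ) * (1 - s^2) ^ (ν - 1/2) :=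
            mul_le_mul_of_nonneg_left hlow hCν.le
          _ = _ := hGeq.symm
      · calc (∫ s, (A - B * s) ^ (-γ) ∂(piMeasure ν))
            = Cν * ∫ s in (-1:ℝ)..1, (A - B*s) ^ (-γ) * (1 - s^2) ^ (ν - 1/2) := hGeq
          _ ≤ Cν * (C * (A ^ (-((ν-1/2)+1)) * (A-B) ^ ((ν-1/2)+1-γ))) :=
            mul_le_mul_of_nonneg_left hup hCν.le
          _ = (Cν*C) * (A ^ (-((ν-1/2)+1)) * (A-B) ^ ((ν-1/2)+1-γ)) := by ring
          _ ≤ max (Cν*c) (Cν*C) * (A ^ (-((ν-1/2)+1)) * (A-B) ^ ((ν-1/2)+1-γ)) :=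
            mul_le_mul_of_nonneg_right (le_max_right _ _) hT

end
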